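/- Fix (ξ,η) ∈ ℂ² and tangent vectors (u₁,v₁), (u₂,v₂) ∈ ℂ². For j = 1,2 define the real vectors Y₂⁽ʲ⁾ = 2Re[(√2·u_j/(1+|ξ|²))·e₊(ξ)] and Y₁⁽ʲ⁾ = 2Re[(√2/(1+|ξ|²))·(v_j − 2·conj(ξ)·η·u_j/(1+|ξ|²))·e₊(ξ)] in ℝ³. Then ⟨Y₁⁽¹⁾, Y₂⁽²⁾⟩ − ⟨Y₁⁽²⁾, Y₂⁽¹⁾⟩ = ω_{(ξ,η)}((u₁,v₁),(u₂,v₂)), i.e. the symplectic form evaluated on two tangent vectors equals the skew pairing of the constant and linear parts of the associated orthogonal Jacobi fields. -/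
import Mathlib

set_option maxHeartbeats 1000000


open Complex ComplexConjugate Matrix

/-- The symplectic form on the space `𝕋 ≅ ℂ²` of oriented lines, evaluated at the
point `(ξ,η)` on the pair of tangent vectors `(u₁,v₁)`, `(u₂,v₂)`. -/
noncomputable def omegaT (ξ η : ℂ) (u₁ v₁ u₂ v₂ : ℂ) : ℝ :=
  2 * ((2 / ((1 + normSq ξ : ℝ) : ℂ) ^ 2) * (v₁ * conj u₂ - v₂ * conj u₁) -
    (4 * conj ξ * η / ((1 + normSq ξ : ℝ) : ℂ) ^ 3) * (u₁ * conj u₂ - u₂ * conj u₁)).re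

/-- The complex null vector `e₊(ξ) ∈ ℂ³`. -/
noncomputable def ePlus (ξ : ℂ) : Fin 3 → ℂ :=
  ![(1 - conj ξ ^ 2) / ((Real.sqrt 2 * (1 + normSq ξ) : ℝ) : ℂ),
    -I * (1 + conj ξ ^ 2) / ((Real.sqrt 2 * (1 + normSq ξ) : ℝ) : ℂ),
    -2 * conj ξ / ((Real.sqrt 2 * (1 + normSq ξ) : ℝ) : ℂ)]

lemma sqrt2_mul_cancel (ξ : ℂ) (c w : ℂ) :
    (((Real.sqrt 2 : ℝ) : ℂ) * c) * (w / ((Real.sqrt 2 * (1 + normSq ξ) : ℝ) : ℂ))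
      = c * w / (((1 + normSq ξ : ℝ)) : ℂ) := by
  have hN : ((1 + normSq ξ : ℝ) : ℂ) ≠ 0 := by
    rw [Complex.ofReal_ne_zero]
    have := Complex.normSq_nonneg ξ; intro h; linarith
  have hs : (((Real.sqrt 2 : ℝ)) : ℂ) ≠ 0 := by
    rw [Complex.ofReal_ne_zero]
    exact ne_of_gt (Real.sqrt_pos.mpr two_pos)
  rw [Complex.ofReal_mul]
  rw [show ((Real.sqrt 2 : ℝ) : ℂ) * c * (w / (((Real.sqrt 2 : ℝ) : ℂ) * ((1 + normSq ξ : ℝ) : ℂ)))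
      = ((Real.sqrt 2 : ℝ) : ℂ) * (c * w) / (((Real.sqrt 2 : ℝ) : ℂ) * ((1 + normSq ξ : ℝ) : ℂ)) from by ring]
  exact mul_div_mul_left _ _ hs

lemma key (ξ : ℂ) (a b : ℂ) :
    (fun i => 2 * ((((Real.sqrt 2 : ℝ) : ℂ) * a) * ePlus ξ i).re) ⬝ᵥ
      (fun i => 2 * ((((Real.sqrt 2 : ℝ) : ℂ) * b) * ePlus ξ i).re)
      = 4 * (a * conj b).re := by
  have hN : (1 + (ξ.re * ξ.re + ξ.im * ξ.im) : ℝ) ≠ 0 := by nlinarith [sq_nonneg ξ.re, sq_nonneg ξ.im]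
  simp only [dotProduct, Fin.sum_univ_three, ePlus, Matrix.cons_val_zero, Matrix.cons_val_one,
    Matrix.head_cons, Matrix.cons_val_two, Matrix.tail_cons, sqrt2_mul_cancel,
    Complex.div_ofReal_re]
  simp only [Complex.mul_re, Complex.mul_im, Complex.conj_re, Complex.conj_im,
    Complex.sub_re, Complex.sub_im, Complex.add_re, Complex.add_im, Complex.one_re,
    Complex.one_im, Complex.I_re, Complex.I_im, Complex.neg_re, Complex.neg_im,
    Complex.normSq_apply, pow_two, Complex.re_ofNat, Complex.im_ofNat]
  field_simp
  ring

/-- the symplectic form evaluated on two tangent vectors equals the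
skew pairing `⟨Y₁⁽¹⁾,Y₂⁽²⁾⟩ − ⟨Y₁⁽²⁾,Y₂⁽¹⁾⟩` of the constant and linear parts of
the associated orthogonal Jacobi fields. -/
theorem symplectic_is_jacobi_pairing (ξ η u₁ v₁ u₂ v₂ : ℂ)
    (Y₁ Y₂ : ℂ → ℂ → Fin 3 → ℝ)
    (hY₂ : ∀ u v, Y₂ u v = fun i =>
      2 * ((((Real.sqrt 2 : ℝ) : ℂ) * u / ((1 + normSq ξ : ℝ) : ℂ)) * ePlus ξ i).re)
    (hY₁ : ∀ u v, Y₁ u v = fun i =>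
      2 * ((((Real.sqrt 2 / (1 + normSq ξ) : ℝ) : ℂ)) *
        (v - 2 * conj ξ * η * u / ((1 + normSq ξ : ℝ) : ℂ)) * ePlus ξ i).re) :
    Y₁ u₁ v₁ ⬝ᵥ Y₂ u₂ v₂ - Y₁ u₂ v₂ ⬝ᵥ Y₂ u₁ v₁ = omegaT ξ η u₁ v₁ u₂ v₂ := by
  have hN : (1 + normSq ξ : ℝ) ≠ 0 := by
    have := Complex.normSq_nonneg ξ; intro h; linarith
  have hNC : ((1 + normSq ξ : ℝ) : ℂ) ≠ 0 := Complex.ofReal_ne_zero.mpr hN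
  have hc2 : ∀ u : ℂ, (((Real.sqrt 2 : ℝ) : ℂ) * u / ((1 + normSq ξ : ℝ) : ℂ))
      = ((Real.sqrt 2 : ℝ) : ℂ) * (u / ((1 + normSq ξ : ℝ) : ℂ)) := fun u => mul_div_assoc _ _ _
  have hc1 : ∀ u v : ℂ, (((Real.sqrt 2 / (1 + normSq ξ) : ℝ) : ℂ)) *
      (v - 2 * conj ξ * η * u / ((1 + normSq ξ : ℝ) : ℂ))
      = ((Real.sqrt 2 : ℝ) : ℂ) *
        ((v - 2 * conj ξ * η * u / ((1 + normSq ξ : ℝ) : ℂ)) / ((1 + normSq ξ : ℝ) : ℂ)) := by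
    intro u v
    rw [Complex.ofReal_div]
    ring
  have hdot : ∀ u v u' v' : ℂ, Y₁ u v ⬝ᵥ Y₂ u' v' =
      4 * (((v - 2 * conj ξ * η * u / ((1 + normSq ξ : ℝ) : ℂ)) / ((1 + normSq ξ : ℝ) : ℂ)) *
        conj (u' / ((1 + normSq ξ : ℝ) : ℂ))).re := by
    intro u v u' v'
    rw [hY₁ u v, hY₂ u' v']
    simp only [hc1, hc2]
    exact key ξ _ _
  rw [hdot u₁ v₁ u₂ v₂, hdot u₂ v₂ u₁ v₁, omegaT]
  rw [show ∀ z w : ℂ, 4 * z.re - 4 * w.re = ((4 : ℂ) * z - 4 * w).re from by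
    intro z w; simp]
  rw [show ∀ z : ℂ, 2 * z.re = ((2 : ℂ) * z).re from by intro z; simp]
  congr 1
  rw [map_div₀, Complex.conj_ofReal, map_div₀, Complex.conj_ofReal]
  generalize hg : ((1 + normSq ξ : ℝ) : ℂ) = N at hNC ⊢
  field_simp
  ring
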